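/- Let h(x) = ∑_{i=1}^n x_i ln(x_i) be the negative entropy on the probability simplex Δ_n = {x ∈ ℝ^n : x_i ≥ 0, ∑ x_i = 1}. Then h is 1-strongly convex with respect to the ℓ₁-norm on Δ_n: for all x in the relative interior of Δ_n and all x' ∈ Δ_n, h(x') ≥ h(x) + ⟨∇h(x), x' - x⟩ + (1/2)‖x' - x‖₁², where ∇h(x)_i = ln(x_i) + 1. -/

import Mathlib

open Real Set

noncomputable def gfun : ℝ → ℝ := fun t => t * Real.log t - t + 1 - 3*(t-1)^2/(2*(t+2))
noncomputable def gfun' : ℝ → ℝ := fun t => Real.log t - 3*(t-1)*(t+5)/(2*(t+2)^2)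

lemma gfun_hasDeriv {t : ℝ} (ht : 0 < t) : HasDerivAt gfun (gfun' t) t := by
  have h2 : (2:ℝ)*(t+2) ≠ 0 := by positivity
  have h1 : HasDerivAt (fun t : ℝ => t * Real.log t) (Real.log t + 1) t :=
    Real.hasDerivAt_mul_log ht.ne'
  have h3 : HasDerivAt (fun t : ℝ => 3*(t-1)^2/(2*(t+2)))
      ((6*(t-1)*(2*(t+2)) - 3*(t-1)^2*2)/(2*(t+2))^2) t := by
    have hu : HasDerivAt (fun t : ℝ => 3*(t-1)^2) (6*(t-1)) t := by
      have := (((hasDerivAt_id' t).sub_const 1).pow 2).const_mul 3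
      refine this.congr_deriv ?_; push_cast; ring
    have hv : HasDerivAt (fun t : ℝ => 2*(t+2)) 2 t := by
      have := ((hasDerivAt_id' t).add_const 2).const_mul 2
      refine this.congr_deriv ?_; ring
    exact hu.div hv h2
  have := (h1.sub (hasDerivAt_id' t)).add_const 1 |>.sub h3
  refine this.congr_deriv ?_
  unfold gfun'
  have h4 : (t+2) ≠ 0 := by positivity
  field_simp
  ring

lemma gfun'_hasDeriv {t : ℝ} (ht : 0 < t) :
    HasDerivAt gfun' ((t-1)^2*(t+8)/(t*(t+2)^3)) t := by
  have h2 : (2:ℝ)*(t+2)^2 ≠ 0 := by positivity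
  have h1 : HasDerivAt Real.log (1/t) t := by
    simpa [one_div] using Real.hasDerivAt_log ht.ne'
  have h3 : HasDerivAt (fun t : ℝ => 3*(t-1)*(t+5)/(2*(t+2)^2))
      (((3*(t-1) + 3*(t+5))*(2*(t+2)^2) - 3*(t-1)*(t+5)*(2*(2*(t+2))))/(2*(t+2)^2)^2) t := by
    have hu : HasDerivAt (fun t : ℝ => 3*(t-1)*(t+5)) (3*(t-1) + 3*(t+5)) t := by
      have ha : HasDerivAt (fun t : ℝ => 3*(t-1)) 3 t := by
        have := ((hasDerivAt_id t).sub_const 1).const_mul 3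
        refine this.congr_deriv ?_; ring
      have := ha.mul ((hasDerivAt_id' t).add_const 5)
      refine this.congr_deriv ?_; ring
    have hv : HasDerivAt (fun t : ℝ => 2*(t+2)^2) (2*(2*(t+2))) t := by
      have := (((hasDerivAt_id' t).add_const 2).pow 2).const_mul 2
      refine this.congr_deriv ?_; push_cast; ring
    exact hu.div hv h2
  have := h1.sub h3
  refine this.congr_deriv ?_
  have h4 : (t+2) ≠ 0 := by positivity
  field_simp
  ring

lemma gfun'_nonneg {t : ℝ} (ht : 1 ≤ t) : 0 ≤ gfun' t := by
  have hmono : MonotoneOn gfun' (Ici 1) := by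
    apply monotoneOn_of_deriv_nonneg (convex_Ici 1)
    · exact fun s hs => (gfun'_hasDeriv (lt_of_lt_of_le one_pos hs)).continuousAt.continuousWithinAt
    · intro s hs
      rw [interior_Ici] at hs
      exact (gfun'_hasDeriv (lt_trans one_pos hs)).differentiableAt.differentiableWithinAt
    · intro s hs
      rw [interior_Ici] at hs
      rw [(gfun'_hasDeriv (lt_trans one_pos hs)).deriv]
      have h0 : (0:ℝ) < s := lt_trans one_pos hs
      apply div_nonneg (by nlinarith) (by nlinarith [mul_pos h0 (pow_pos (show (0:ℝ)<s+2 by linarith) 3)])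
  have h1 : gfun' 1 = 0 := by simp [gfun']
  calc (0:ℝ) = gfun' 1 := h1.symm
    _ ≤ gfun' t := hmono (by simp) ht ht

lemma gfun'_nonpos {t : ℝ} (ht0 : 0 < t) (ht : t ≤ 1) : gfun' t ≤ 0 := by
  have hmono : MonotoneOn gfun' (Icc t 1) := by
    apply monotoneOn_of_deriv_nonneg (convex_Icc t 1)
    · exact fun s hs => (gfun'_hasDeriv (lt_of_lt_of_le ht0 hs.1)).continuousAt.continuousWithinAt
    · intro s hs
      rw [interior_Icc] at hs
      exact (gfun'_hasDeriv (lt_of_lt_of_le ht0 hs.1.le)).differentiableAt.differentiableWithinAt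
    · intro s hs
      rw [interior_Icc] at hs
      rw [(gfun'_hasDeriv (lt_of_lt_of_le ht0 hs.1.le)).deriv]
      have h0 : 0 < s := lt_of_lt_of_le ht0 hs.1.le
      apply div_nonneg (by nlinarith) (by nlinarith [mul_pos h0 (pow_pos (show (0:ℝ)<s+2 by linarith) 3)])
  have h1 : gfun' 1 = 0 := by simp [gfun']
  calc gfun' t ≤ gfun' 1 := hmono (by simp [ht]) (by simp [ht]) ht
    _ = 0 := h1

lemma gfun_cont : ContinuousOn gfun (Ici 0) := by
  apply ContinuousOn.sub
  · apply ContinuousOn.add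
    · exact (Real.continuous_mul_log.sub continuous_id).continuousOn
    · exact continuousOn_const
  · apply ContinuousOn.div
    · fun_prop
    · fun_prop
    · intro s hs
      have : (0:ℝ) ≤ s := hs
      positivity

lemma gfun_nonneg {t : ℝ} (ht : 0 ≤ t) : 0 ≤ gfun t := by
  have hg1 : gfun 1 = 0 := by norm_num [gfun]
  rcases le_or_gt 1 t with h | h
  · have hmono : MonotoneOn gfun (Ici 1) := by
      apply monotoneOn_of_deriv_nonneg (convex_Ici 1)
      · exact gfun_cont.mono (by intro s hs; exact le_trans zero_le_one (show (1:ℝ) ≤ s from hs))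
      · intro s hs
        rw [interior_Ici] at hs
        exact (gfun_hasDeriv (lt_trans one_pos hs)).differentiableAt.differentiableWithinAt
      · intro s hs
        rw [interior_Ici] at hs
        rw [(gfun_hasDeriv (lt_trans one_pos hs)).deriv]
        exact gfun'_nonneg hs.le
    calc (0:ℝ) = gfun 1 := hg1.symm
      _ ≤ gfun t := hmono (by simp) (by simp; linarith) h
  · have hmono : AntitoneOn gfun (Icc 0 1) := by
      apply antitoneOn_of_deriv_nonpos (convex_Icc 0 1)
      · exact gfun_cont.mono Icc_subset_Ici_self
      · intro s hs
        rw [interior_Icc] at hs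
        exact (gfun_hasDeriv hs.1).differentiableAt.differentiableWithinAt
      · intro s hs
        rw [interior_Icc] at hs
        rw [(gfun_hasDeriv hs.1).deriv]
        exact gfun'_nonpos hs.1 hs.2.le
    calc (0:ℝ) = gfun 1 := hg1.symm
      _ ≤ gfun t := hmono (by constructor <;> linarith) (by norm_num) h.le

lemma key_pointwise {q p : ℝ} (hq : 0 < q) (hp : 0 ≤ p) :
    p * Real.log p - p * Real.log q ≥ (p - q) + 3*(p-q)^2/(2*(p+2*q)) := by
  rcases eq_or_lt_of_le hp with h0 | hp
  · rw [← h0]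
    have h5 : 3*((0:ℝ)-q)^2/(2*(0+2*q)) = 3*q/4 := by field_simp; ring
    rw [h5]
    simp
    linarith
  · have hg := gfun_nonneg (t := p/q) (by positivity)
    have hl : Real.log (p/q) = Real.log p - Real.log q := Real.log_div hp.ne' hq.ne'
    unfold gfun at hg
    rw [hl] at hg
    have hmul := mul_le_mul_of_nonneg_left hg hq.le
    rw [mul_zero] at hmul
    have hne : q ≠ 0 := hq.ne'
    have hne2 : p + 2*q ≠ 0 := by positivity
    have hne3 : p/q + 2 ≠ 0 := by positivity
    have heq : q * (p/q * (Real.log p - Real.log q) - p/q + 1 - 3*(p/q-1)^2/(2*(p/q+2)))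
        = p * Real.log p - p * Real.log q - ((p - q) + 3*(p-q)^2/(2*(p+2*q))) := by
      field_simp
      ring
    rw [heq] at hmul
    linarith

/-- The probability simplex in `Fin n → ℝ`. -/
def simplex (n : ℕ) : Set (Fin n → ℝ) :=
  {x | (∀ i, 0 ≤ x i) ∧ ∑ i, x i = 1}

theorem stmt_8 (n : ℕ) (x x' : Fin n → ℝ)
    (hx : x ∈ simplex n) (hxpos : ∀ i, 0 < x i) (hx' : x' ∈ simplex n) :
    ∑ i, x' i * Real.log (x' i) ≥
      (∑ i, x i * Real.log (x i)) +
      (∑ i, (Real.log (x i) + 1) * (x' i - x i)) +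
      (1 / 2) * (∑ i, |x' i - x i|)^2 := by
  obtain ⟨hxnn, hxs⟩ := hx
  obtain ⟨hx'nn, hx's⟩ := hx'
  have hdiff : ∑ i, (x' i - x i) = 0 := by
    rw [Finset.sum_sub_distrib, hxs, hx's]; ring
  have hgrad : (∑ i, x i * Real.log (x i)) + (∑ i, (Real.log (x i) + 1) * (x' i - x i))
      = ∑ i, x' i * Real.log (x i) := by
    rw [← Finset.sum_add_distrib]
    have h1 : ∀ i ∈ Finset.univ, x i * Real.log (x i) + (Real.log (x i) + 1) * (x' i - x i)
        = x' i * Real.log (x i) + (x' i - x i) := fun i _ => by ring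
    rw [Finset.sum_congr rfl h1, Finset.sum_add_distrib, hdiff, add_zero]
  have hpt : ∀ i ∈ Finset.univ, (x' i - x i) + 3*(x' i - x i)^2/(2*(x' i + 2 * x i))
      ≤ x' i * Real.log (x' i) - x' i * Real.log (x i) :=
    fun i _ => key_pointwise (hxpos i) (hx'nn i)
  have hsum := Finset.sum_le_sum hpt
  rw [Finset.sum_sub_distrib, Finset.sum_add_distrib, hdiff, zero_add] at hsum
  have hw : ∑ i, (x' i + 2 * x i) = 3 := by
    rw [Finset.sum_add_distrib, hx's, ← Finset.mul_sum, hxs]; norm_num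
  have hcs := Finset.sq_sum_div_le_sum_sq_div Finset.univ (fun i => |x' i - x i|)
    (g := fun i => x' i + 2 * x i)
    (fun i _ => by have h1 := hxpos i; have h2 := hx'nn i; show 0 < x' i + 2 * x i; linarith)
  rw [hw] at hcs
  have hT : ∑ i, 3*(x' i - x i)^2/(2*(x' i + 2 * x i))
      = (3/2) * ∑ i, |x' i - x i|^2/(x' i + 2 * x i) := by
    rw [Finset.mul_sum]
    refine Finset.sum_congr rfl fun i _ => ?_
    have h1 := hxpos i
    have h2 := hx'nn i
    have hne : x' i + 2 * x i ≠ 0 := by linarith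
    rw [sq_abs]
    field_simp
  rw [hT] at hsum
  rw [hgrad]
  linarith
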